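/- The terminating Pfaff–Euler transformation: for a natural number n, real b, c, x with appropriate nonvanishing denominators, ∑_{k=0}^n (-n)_k (b)_k x^k / (k! (c)_k) = ((c-b)_n/(c)_n) · ∑_{k=0}^n (-n)_k (b)_k (1-x)^k / (k! (b+1-n-c)_k). -/

import Mathlib

open Finset

noncomputable def pp (k : ℕ) (x : ℝ) : ℝ := (ascPochhammer ℝ k).eval x
lemma pp_zero (x : ℝ) : pp 0 x = 1 := by simp [pp]
lemma pp_succ (k : ℕ) (x : ℝ) : pp (k+1) x = pp k x * (x + k) := ascPochhammer_succ_eval k x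
lemma pp_succ_left (k : ℕ) (x : ℝ) : pp (k+1) x = x * pp k (x+1) := by
  simp [pp, ascPochhammer_succ_left, Polynomial.eval_comp]
lemma pp_add (i j : ℕ) (x : ℝ) : pp (i + j) x = pp i x * pp j (x + i) := by
  have h := ascPochhammer_mul (S := ℝ) i j
  have := congrArg (Polynomial.eval x) h
  simpa [pp, Polynomial.eval_comp] using this.symm
lemma pp_reflect (m : ℕ) (x : ℝ) : pp m x = (-1)^m * pp m (1 - x - m) := by
  induction m with
  | zero => simp [pp_zero]
  | succ m ih =>
    have h1 : pp (m+1) x = pp m x * (x + m) := pp_succ m x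
    have h2 : pp (m+1) (1 - x - (m+1 : ℕ)) = (1 - x - ((m:ℝ)+1)) * pp m (1 - x - m) := by
      push_cast
      rw [pp_succ_left]
      ring_nf
    rw [h1, ih, h2]
    push_cast
    ring
lemma pp_neg_nat (m i : ℕ) : pp i (-(m:ℝ)) = (-1)^i * i.factorial * (m.choose i) := by
  rcases le_or_gt i m with h | h
  · rw [pp_reflect]
    have harg : 1 - (-(m:ℝ)) - i = ((m - i + 1 : ℕ) : ℝ) := by
      push_cast [Nat.cast_sub h]; ring
    rw [harg]
    have : pp i ((m - i + 1 : ℕ) : ℝ) = (((m - i + 1).ascFactorial i : ℕ) : ℝ) := by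
      rw [pp, ← ascPochhammer_eval_cast, ascPochhammer_nat_eq_ascFactorial]
    rw [this, Nat.ascFactorial_eq_factorial_mul_choose, Nat.sub_add_cancel h]
    push_cast; ring
  · rw [Nat.choose_eq_zero_of_lt h]
    have : i = (m + 1) + (i - m - 1) := by omega
    rw [this, pp_add, pp_succ]
    simp

lemma vand (m : ℕ) : ∀ b c : ℝ,
    ∑ k ∈ Finset.range (m+1), (-1:ℝ)^k * (m.choose k) * pp k b * pp (m-k) (c + k)
      = pp m (c - b) := by
  induction m with
  | zero => intro b c; simp [pp_zero]
  | succ m ih =>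
    intro b c
    set F : ℕ → ℝ := fun k => (-1:ℝ)^k * ((m+1).choose k) * pp k b * pp (m+1-k) (c + k) with hF
    set A : ℕ → ℝ := fun i => (-1:ℝ)^(i+1) * (m.choose (i+1)) * pp (i+1) b * pp (m-i) (c + ((i+1:ℕ):ℝ)) with hA
    set B : ℕ → ℝ := fun i => (-1:ℝ)^i * (m.choose i) * pp i (b+1) * pp (m-i) ((c+1) + i) with hB
    set K : ℕ → ℝ := fun k => (-1:ℝ)^k * (m.choose k) * pp k b * pp (m+1-k) (c + k) with hK
    have e0 : ∑ k ∈ Finset.range (m+1+1), F k = (∑ i ∈ Finset.range (m+1), F (i+1)) + F 0 :=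
      Finset.sum_range_succ' F (m+1)
    have e1 : ∑ i ∈ Finset.range (m+1), F (i+1)
        = (∑ i ∈ Finset.range (m+1), A i) + (-b) * ∑ i ∈ Finset.range (m+1), B i := by
      rw [Finset.mul_sum, ← Finset.sum_add_distrib]
      apply Finset.sum_congr rfl
      intro i _
      simp only [hF, hA, hB]
      rw [Nat.choose_succ_succ]
      have h1 : pp (i+1) b = b * pp i (b+1) := pp_succ_left i b
      have h2 : ((c:ℝ)+1) + i = c + ((i+1 : ℕ) : ℝ) := by push_cast; ring
      have h3 : m + 1 - (i+1) = m - i := by omega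
      rw [h3, h1, h2]
      push_cast
      ring
    have eB : ∑ i ∈ Finset.range (m+1), B i = pp m (c - b) := by
      simp only [hB]
      rw [ih (b+1) (c+1)]
      congr 1; ring
    have e2 : (∑ i ∈ Finset.range (m+1), A i) + F 0 = ∑ k ∈ Finset.range (m+1+1), K k := by
      rw [Finset.sum_range_succ' K (m+1)]
      congr 1
      · apply Finset.sum_congr rfl
        intro i _
        simp only [hA, hK]
        have h3 : m + 1 - (i+1) = m - i := by omega
        rw [h3]
      · simp [hF, hK, pp_zero]
    have e3 : ∑ k ∈ Finset.range (m+1+1), K k = (c + m) * pp m (c - b) := by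
      rw [Finset.sum_range_succ]
      have hz : K (m+1) = 0 := by simp [hK, Nat.choose_succ_self]
      rw [hz, add_zero]
      have step : ∀ k ∈ Finset.range (m+1),
          K k = (c + m) * ((-1:ℝ)^k * (m.choose k) * pp k b * pp (m-k) (c + k)) := by
        intro k hk
        have hk' : k ≤ m := by simpa [Nat.lt_succ_iff] using hk
        simp only [hK]
        have h4 : m + 1 - k = (m - k) + 1 := by omega
        rw [h4, pp_succ]
        have h5 : ((m - k : ℕ) : ℝ) = (m : ℝ) - k := by push_cast [Nat.cast_sub hk']; ring
        rw [h5]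
        ring
      rw [Finset.sum_congr rfl step, ← Finset.mul_sum, ih b c]
    show ∑ k ∈ Finset.range (m+1+1), F k = pp (m+1) (c - b)
    rw [pp_succ]
    push_cast
    linear_combination e0 + e1 + e2 + e3 + (-b) * eB

-- divided Chu-Vandermonde
lemma chu (m : ℕ) (β γ : ℝ) (hγ : ∀ i ≤ m, pp i γ ≠ 0) :
    ∑ i ∈ Finset.range (m+1), pp i (-(m:ℝ)) * pp i β / (i.factorial * pp i γ)
      = pp m (γ - β) / pp m γ := by
  rw [eq_div_iff (hγ m le_rfl), Finset.sum_mul, ← vand m β γ]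
  apply Finset.sum_congr rfl
  intro i hi
  have hi' : i ≤ m := by simpa [Nat.lt_succ_iff] using hi
  have hsplit : pp m γ = pp i γ * pp (m-i) (γ + i) := by
    have h : i + (m - i) = m := by omega
    rw [← h, pp_add, Nat.add_sub_cancel_left]
  rw [pp_neg_nat, hsplit]
  have h1 : pp i γ ≠ 0 := hγ i hi'
  have h2 : (i.factorial : ℝ) ≠ 0 := by positivity
  field_simp

-- triangular sum swap
lemma tri_swap (n : ℕ) (f : ℕ → ℕ → ℝ) :
    ∑ k ∈ Finset.range (n+1), ∑ j ∈ Finset.range (k+1), f k j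
      = ∑ j ∈ Finset.range (n+1), ∑ i ∈ Finset.range (n+1-j), f (j+i) j := by
  induction n with
  | zero => simp
  | succ n ih =>
    rw [Finset.sum_range_succ _ (n+1), ih]
    rw [Finset.sum_range_succ (fun j => ∑ i ∈ Finset.range (n+1+1-j), f (j+i) j)]
    have e : n+1+1-(n+1) = 1 := by omega
    rw [e, Finset.sum_range_one, Nat.add_zero]
    rw [Finset.sum_range_succ (fun j => f (n+1) j)]
    have main : ∑ x ∈ Finset.range (n+1), ∑ i ∈ Finset.range (n+1+1-x), f (x+i) x
        = (∑ j ∈ Finset.range (n+1), ∑ i ∈ Finset.range (n+1-j), f (j+i) j)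
          + ∑ x ∈ Finset.range (n+1), f (n+1) x := by
      rw [← Finset.sum_add_distrib]
      apply Finset.sum_congr rfl
      intro j hj
      have hj' : j ≤ n := by simpa [Nat.lt_succ_iff] using hj
      have h1 : n + 1 + 1 - j = (n + 1 - j) + 1 := by omega
      rw [h1, Finset.sum_range_succ]
      have h2 : j + (n + 1 - j) = n + 1 := by omega
      rw [h2]
    rw [main]
    ring

lemma pp_def (k : ℕ) (x : ℝ) : (ascPochhammer ℝ k).eval x = pp k x := rfl

theorem pfaff_euler_terminating (n : ℕ) (b c x : ℝ)
    (hc : ∀ k ≤ n, (ascPochhammer ℝ k).eval c ≠ 0)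
    (hd : ∀ k ≤ n, (ascPochhammer ℝ k).eval (b + 1 - (n : ℝ) - c) ≠ 0) :
    ∑ k ∈ Finset.range (n + 1),
        (ascPochhammer ℝ k).eval (-(n : ℝ)) * (ascPochhammer ℝ k).eval b * x ^ k /
          ((Nat.factorial k) * (ascPochhammer ℝ k).eval c) =
      ((ascPochhammer ℝ n).eval (c - b) / (ascPochhammer ℝ n).eval c) *
        ∑ k ∈ Finset.range (n + 1),
          (ascPochhammer ℝ k).eval (-(n : ℝ)) * (ascPochhammer ℝ k).eval b * (1 - x) ^ k /
            ((Nat.factorial k) * (ascPochhammer ℝ k).eval (b + 1 - (n : ℝ) - c)) := by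
  simp only [pp_def] at *
  set d : ℝ := b + 1 - (n:ℝ) - c with hd_def
  set f : ℕ → ℕ → ℝ := fun k j =>
    (pp k (-(n:ℝ)) * pp k b / (k.factorial * pp k d)) * ((-x)^j * (k.choose j)) with hf
  have expand : ∀ k ∈ Finset.range (n+1),
      pp k (-(n:ℝ)) * pp k b * (1-x)^k / (k.factorial * pp k d)
        = ∑ j ∈ Finset.range (k+1), f k j := by
    intro k _
    have h1 : (1 - x : ℝ) = -x + 1 := by ring
    rw [h1, add_pow, Finset.mul_sum, Finset.sum_div]
    apply Finset.sum_congr rfl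
    intro j _
    simp only [hf, one_pow]
    ring
  rw [Finset.sum_congr rfl expand, tri_swap, Finset.mul_sum]
  apply Finset.sum_congr rfl
  intro j hj
  have hjn : j ≤ n := by simpa [Nat.lt_succ_iff] using hj
  set m : ℕ := n - j with hm
  have hjm : j + m = n := by omega
  have hrange : n + 1 - j = m + 1 := by omega
  rw [hrange]
  -- nonvanishing facts
  have hcn : pp n c ≠ 0 := hc n le_rfl
  have hcj : pp j c ≠ 0 := hc j hjn
  have hdj : pp j d ≠ 0 := hd j hjn
  have hdn : pp n d ≠ 0 := hd n le_rfl
  have hsplit_c : pp n c = pp j c * pp m (c + j) := by rw [← hjm, pp_add]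
  have hsplit_d : pp n d = pp j d * pp m (d + j) := by rw [← hjm, pp_add]
  have hcm : pp m (c + j) ≠ 0 := by
    intro h; apply hcn; rw [hsplit_c, h, mul_zero]
  have hdm : pp m (d + j) ≠ 0 := by
    intro h; apply hdn; rw [hsplit_d, h, mul_zero]
  have hγ : ∀ i ≤ m, pp i (d + j) ≠ 0 := by
    intro i hi
    have h1 : pp (j+i) d = pp j d * pp i (d + j) := pp_add j i d
    have h2 : pp (j+i) d ≠ 0 := hd (j+i) (by omega)
    intro h; apply h2; rw [h1, h, mul_zero]
  -- termwise reduction of the inner sum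
  have hneg : -(n:ℝ) + j = -(m:ℝ) := by
    have : ((m:ℝ)) = (n:ℝ) - j := by rw [hm]; push_cast [Nat.cast_sub hjn]; ring
    rw [this]; ring
  have term : ∀ i ∈ Finset.range (m+1),
      f (j+i) j = (pp j (-(n:ℝ)) * pp j b / (j.factorial * pp j d)) * (-x)^j
        * (pp i (-(m:ℝ)) * pp i (b + j) / (i.factorial * pp i (d + j))) := by
    intro i hi
    simp only [hf]
    rw [pp_add j i (-(n:ℝ)), pp_add j i b, pp_add j i d, hneg]
    have hch : (((j+i).choose j : ℕ) : ℝ) * j.factorial * i.factorial = ((j+i).factorial : ℝ) := by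
      have := Nat.choose_mul_factorial_mul_factorial (Nat.le_add_right j i)
      rw [Nat.add_sub_cancel_left] at this
      exact_mod_cast congrArg (Nat.cast : ℕ → ℝ) this
    have hjf : (j.factorial : ℝ) ≠ 0 := by positivity
    have hif : (i.factorial : ℝ) ≠ 0 := by positivity
    have hpi : pp i (d + j) ≠ 0 := hγ i (by simpa [Nat.lt_succ_iff] using hi)
    have hch0 : (((j+i).choose j : ℕ) : ℝ) ≠ 0 := by
      exact_mod_cast (Nat.choose_pos (Nat.le_add_right j i)).ne'
    rw [← hch]
    field_simp
  rw [Finset.sum_congr rfl term]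
  rw [← Finset.mul_sum]
  rw [chu m (b + (j:ℝ)) (d + (j:ℝ)) hγ]
  rw [show d + (j:ℝ) - (b + (j:ℝ)) = d - b by ring]
  have hm' : (m:ℝ) = (n:ℝ) - (j:ℝ) := by rw [hm]; push_cast [Nat.cast_sub hjn]; ring
  have hrefl1 : pp m (d - b) = (-1:ℝ)^m * pp m (c + (j:ℝ)) := by
    rw [pp_reflect m (d - b)]
    congr 2
    rw [hd_def, hm']; ring
  have hrefl2 : pp n (c - b) = (-1:ℝ)^n * pp n d := by
    rw [pp_reflect n (c - b)]
    congr 2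
    rw [hd_def]; ring
  have hsgn : (-1:ℝ)^n * (-1:ℝ)^m * (-1:ℝ)^j = 1 := by
    rw [← pow_add, ← pow_add]
    have h2n : n + m + j = 2*n := by omega
    rw [h2n, pow_mul]
    norm_num
  have key : pp n (c - b) * pp m (d - b) * pp j c * (-1:ℝ)^j
      = pp n c * pp j d * pp m (d + (j:ℝ)) := by
    rw [hrefl1, hrefl2, hsplit_d, hsplit_c]
    linear_combination (pp j d * pp m (d + (j:ℝ)) * pp m (c + (j:ℝ)) * pp j c) * hsgn
  have hjf : (j.factorial : ℝ) ≠ 0 := by positivity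
  rw [neg_pow]
  field_simp
  linear_combination (-(pp j (-(n:ℝ)) * pp j b * x^j)) * key
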